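/- Let X be a standard Borel space (e.g. a Borel subset of ℝ^d with its Borel σ-algebra), λ a σ-finite measure on X, and q₁, q₂, q₃, q₄ : X → [0,∞) measurable probability densities with respect to λ (i.e. ∫ q_i dλ = 1 for each i). Set S := ∫_X min{q₁(u), q₂(u), q₃(u), q₄(u)} λ(du). Then there exists a probability measure ν on X⁴ such that for each i ∈ {1,2,3,4} the i-th coordinate marginal of ν has density q_i with respect to λ, and ν({(x₁,x₂,x₃,x₄) ∈ X⁴ : x₁ = x₂ = x₃ = x₄}) = S. -/

import Mathlib

open MeasureTheory

/-- existence of a four-marginal maximal coupling: given four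
probability densities `q i` with respect to a σ-finite measure `lam` on a
standard Borel space, there is a coupling `ν` on `X⁴` with these marginals
giving the diagonal exactly the mass
`S = ∫ min_i q_i dlam = ∫ ⨅ i, q i dlam`. -/
theorem four_marginal_maximal_coupling_exists
    {X : Type*} [MeasurableSpace X] [StandardBorelSpace X] [Nonempty X]
    (lam : Measure X) [SigmaFinite lam]
    (q : Fin 4 → X → ENNReal) (hqmeas : ∀ i, Measurable (q i))
    (hqprob : ∀ i, ∫⁻ u, q i u ∂lam = 1) :
    ∃ ν : Measure (Fin 4 → X), IsProbabilityMeasure ν ∧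
      (∀ i : Fin 4, ν.map (fun f => f i) = lam.withDensity (q i)) ∧
      ν {f : Fin 4 → X | ∀ i : Fin 4, f i = f 0} =
        ∫⁻ u, ⨅ i : Fin 4, q i u ∂lam := by
  classical
  set inf : X → ENNReal := fun u => ⨅ i, q i u with hinf_def
  have hinfmeas : Measurable inf := Measurable.iInf fun i => hqmeas i
  set S : ENNReal := ∫⁻ u, inf u ∂lam with hS_def
  have hinf_le : ∀ i u, inf u ≤ q i u := fun i u => iInf_le _ i
  have hS_le : S ≤ 1 := by
    rw [← hqprob 0]; exact lintegral_mono fun u => hinf_le 0 u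
  have hS_ne_top : S ≠ ⊤ := (lt_of_le_of_lt hS_le ENNReal.one_lt_top).ne
  set g : Fin 4 → X → ENNReal := fun i u => q i u - inf u with hg_def
  have hgmeas : ∀ i, Measurable (g i) := fun i => (hqmeas i).sub hinfmeas
  set m : Measure X := lam.withDensity inf with hm_def
  set r : Fin 4 → Measure X := fun i => lam.withDensity (g i) with hr_def
  have hm_univ : m Set.univ = S := by
    rw [hm_def, withDensity_apply _ MeasurableSet.univ, setLIntegral_univ]
  have hr_univ : ∀ i, r i Set.univ = 1 - S := by
    intro i
    rw [hr_def, withDensity_apply _ MeasurableSet.univ, setLIntegral_univ, hg_def]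
    rw [lintegral_sub hinfmeas (by rw [← hS_def]; exact hS_ne_top)
      (Filter.Eventually.of_forall fun u => hinf_le i u), hqprob i]
  have hmr : ∀ i, m + r i = lam.withDensity (q i) := by
    intro i
    rw [hm_def, hr_def, ← withDensity_add_left hinfmeas]
    congr 1
    funext u
    exact add_tsub_cancel_of_le (hinf_le i u)
  haveI hfin : ∀ i, IsFiniteMeasure (r i) := by
    intro i
    refine ⟨?_⟩
    rw [hr_univ i]
    exact lt_of_le_of_lt tsub_le_self ENNReal.one_lt_top
  haveI hsig : ∀ i, SigmaFinite (r i) := fun i => inferInstance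
  -- the diagonal map
  set dm : X → (Fin 4 → X) := fun x _ => x with hdm_def
  have hdm : Measurable dm := measurable_pi_lambda _ fun _ => measurable_id
  set c : ENNReal := ((1 - S) ^ 3)⁻¹ with hc_def
  set ν : Measure (Fin 4 → X) := m.map dm + c • Measure.pi r with hν_def
  -- key scalar identity
  have hkey : ∀ x : ENNReal, x ≤ 1 - S → c * ((1 - S) ^ 3 * x) = x := by
    intro x hx
    rcases eq_or_lt_of_le hS_le with hS1 | hS1
    · have h0 : (1 : ENNReal) - S = 0 := by rw [← hS1, tsub_self]
      have hx0 : x = 0 := le_antisymm (h0 ▸ hx) zero_le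
      simp [hx0]
    · have ht0 : (1 : ENNReal) - S ≠ 0 := by
        simp only [ne_eq, tsub_eq_zero_iff_le, not_le]; exact hS1
      have htt : (1 : ENNReal) - S ≠ ⊤ := (lt_of_le_of_lt tsub_le_self ENNReal.one_lt_top).ne
      rw [← mul_assoc, hc_def, ENNReal.inv_mul_cancel (pow_ne_zero 3 ht0)
        (ENNReal.pow_ne_top htt), one_mul]
  -- pi measure of eval preimages
  have hpi_eval : ∀ (i : Fin 4) (s : Set X), MeasurableSet s →
      Measure.pi r ((fun f : Fin 4 → X => f i) ⁻¹' s) = (1 - S) ^ 3 * r i s := by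
    intro i s hs
    have hpre : (fun f : Fin 4 → X => f i) ⁻¹' s =
        Set.pi Set.univ (Function.update (fun _ => (Set.univ : Set X)) i s) :=
      Set.eval_preimage
    rw [hpre, Measure.pi_pi]
    have hupd : ∀ j, r j (Function.update (fun _ => (Set.univ : Set X)) i s j) =
        Function.update (fun _ : Fin 4 => 1 - S) i (r i s) j := by
      intro j
      rcases eq_or_ne j i with rfl | hj
      · simp
      · simp [Function.update_of_ne hj, hr_univ]
    rw [Finset.prod_congr rfl fun j _ => hupd j,
      Finset.prod_update_of_mem (Finset.mem_univ i), Finset.prod_const]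
    have hcard : (Finset.univ \ {i}).card = 3 := by
      rw [Finset.card_sdiff_of_subset (Finset.subset_univ _)]
      simp
    rw [hcard, mul_comm]
  -- the diagonal set
  set D : Set (Fin 4 → X) := {f : Fin 4 → X | ∀ i : Fin 4, f i = f 0} with hD_def
  have hDmeas : MeasurableSet D := by
    letI := upgradeStandardBorel X
    have : D = ⋂ i : Fin 4, {f : Fin 4 → X | f i = f 0} := by
      ext f; simp [hD_def]
    rw [this]
    exact MeasurableSet.iInter fun i =>
      (measurable_pi_apply i).stronglyMeasurable.measurableSet_eq_fun
        (measurable_pi_apply 0).stronglyMeasurable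
  -- pi r gives no mass to the diagonal
  have hpiD : Measure.pi r D = 0 := by
    set A : Fin 4 → Set X := fun i => {x | q i x = inf x} with hA_def
    have hrA : ∀ i, r i (A i) = 0 := by
      intro i
      have hAmeas : MeasurableSet (A i) := measurableSet_eq_fun (hqmeas i) hinfmeas
      rw [hr_def, withDensity_apply _ hAmeas]
      rw [setLIntegral_congr_fun hAmeas (fun x hx => by
        show q i x - inf x = 0
        rw [hx, tsub_self])]
      simp
    have hcover : ∀ x : X, ∃ i, x ∈ A i := by
      intro x
      obtain ⟨i, hi⟩ := Finite.exists_min fun i => q i x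
      exact ⟨i, le_antisymm (le_iInf hi) (iInf_le _ i)⟩
    have hsub : D ⊆ ⋃ i, (fun f : Fin 4 → X => f i) ⁻¹' (A i) := by
      intro f hf
      obtain ⟨i, hi⟩ := hcover (f 0)
      exact Set.mem_iUnion.2 ⟨i, by simpa [hf i] using hi⟩
    refine measure_mono_null hsub (measure_iUnion_null fun i =>
      Measure.pi_eval_preimage_null _ (hrA i))
  refine ⟨ν, ?_, ?_, ?_⟩
  · -- probability measure
    refine ⟨?_⟩
    rw [hν_def, Measure.add_apply, Measure.smul_apply, Measure.map_apply hdm MeasurableSet.univ,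
      Set.preimage_univ, hm_univ, Measure.pi_univ]
    have : ∏ j : Fin 4, r j Set.univ = (1 - S) ^ 3 * (1 - S) := by
      simp_rw [hr_univ]
      rw [Finset.prod_const, Finset.card_univ]
      simp [pow_succ]
    rw [this, smul_eq_mul, hkey _ le_rfl, add_tsub_cancel_of_le hS_le]
  · -- marginals
    intro i
    refine Measure.ext fun s hs => ?_
    rw [Measure.map_apply (measurable_pi_apply i) hs, hν_def, Measure.add_apply,
      Measure.smul_apply, Measure.map_apply hdm ((measurable_pi_apply i) hs)]
    have hpre : dm ⁻¹' ((fun f : Fin 4 → X => f i) ⁻¹' s) = s := rfl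
    rw [hpre, hpi_eval i s hs, smul_eq_mul,
      hkey _ (by rw [← hr_univ i]; exact measure_mono (Set.subset_univ s)),
      ← hmr i, Measure.add_apply]
  · -- diagonal mass
    rw [hν_def, Measure.add_apply, Measure.smul_apply, hpiD, smul_zero, add_zero,
      Measure.map_apply hdm hDmeas]
    have : dm ⁻¹' D = Set.univ := Set.eq_univ_of_forall fun x i => rfl
    rw [this, hm_univ]
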